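/- Let S have distribution Ψ_κ(μ, σ²) with variance v = Var(S). Then its discrete zero biased distribution S* satisfies P(S* = j) = σ²P(S = j)/v for j ≥ κ, P(S* = κ−1) = 1 − σ²/v, and P(S* = j) = σ²P(S = j+1)/v for j ≤ κ−2. -/

import Mathlib

open MeasureTheory Filter

private noncomputable def clampZ (n : ℕ) (i : ℤ) : ℝ := ((max (-(n:ℤ)) (min i n) : ℤ) : ℝ)

private lemma clampZ_bound (n : ℕ) (i : ℤ) : |clampZ n i| ≤ (n : ℝ) := by
  unfold clampZ
  rw [← Int.cast_abs]
  exact_mod_cast (by simp only [Int.abs_eq_natAbs]; omega : |max (-(n:ℤ)) (min i n)| ≤ (n:ℤ))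

private lemma clampZ_eq (n : ℕ) (i : ℤ) (h : i.natAbs ≤ n) : clampZ n i = (i : ℝ) := by
  unfold clampZ
  exact_mod_cast congrArg Int.cast (by omega : max (-(n:ℤ)) (min i n) = i)

private lemma clampZ_step (n : ℕ) (i : ℤ) : |clampZ n (i+1) - clampZ n i| ≤ 1 := by
  unfold clampZ
  rw [← Int.cast_sub, ← Int.cast_abs]
  exact_mod_cast (by simp only [Int.abs_eq_natAbs]; omega :
    |max (-(n:ℤ)) (min (i+1) n) - max (-(n:ℤ)) (min i n)| ≤ (1:ℤ))

private lemma clampZ_le_abs (n : ℕ) (i : ℤ) : |clampZ n i| ≤ |(i:ℝ)| := by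
  unfold clampZ
  rw [← Int.cast_abs, ← Int.cast_abs]
  exact_mod_cast (by simp only [Int.abs_eq_natAbs]; omega :
    |max (-(n:ℤ)) (min i n)| ≤ |i|)

/-- The discrete zero biased distribution of `S ~ Ψ_κ(μ, σ²)`: with `v = Var(S)`,
`P(S* = j) = σ²P(S = j)/v` for `j ≥ κ`, `P(S* = κ-1) = 1 - σ²/v`, and
`P(S* = j) = σ²P(S = j+1)/v` for `j ≤ κ-2`. -/
theorem psi_zero_bias
    {Ω : Type*} [MeasurableSpace Ω] (P : Measure Ω) [IsProbabilityMeasure P]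
    (S Ss : Ω → ℤ) (hS : Measurable S) (hSs : Measurable Ss)
    (μ σ2 : ℝ) (hσ : 0 < σ2) (κ : ℤ)
    (h1 : μ - σ2 < (κ : ℝ)) (h2 : (κ : ℝ) < μ + σ2 + 1)
    (hint : Integrable (fun ω => ((S ω : ℝ)) ^ 2) P)
    -- S is characterized by E[Bf(S)] = 0 for all bounded f
    (hB : ∀ f : ℤ → ℝ, (∃ C, ∀ i, |f i| ≤ C) →
      ∫ ω, (if κ ≤ S ω then
          σ2 * (f (S ω + 1) - f (S ω)) - ((S ω : ℝ) - μ) * f (S ω)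
        else
          σ2 * (f (S ω + 1) - f (S ω)) - ((S ω : ℝ) - μ) * f (S ω + 1)) ∂P = 0)
    (v : ℝ) (hv : v = ∫ ω, ((S ω : ℝ) - μ) ^ 2 ∂P)
    -- S* has the discrete S-zero biased distribution
    (hzb : ∀ f : ℤ → ℝ, (∃ C, ∀ i, |f i| ≤ C) →
      ∫ ω, ((S ω : ℝ) - μ) * f (S ω) ∂P
        = v * ∫ ω, (f (Ss ω + 1) - f (Ss ω)) ∂P) :
    (∀ j : ℤ, κ ≤ j →
        (P {ω | Ss ω = j}).toReal = σ2 * (P {ω | S ω = j}).toReal / v) ∧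
    (P {ω | Ss ω = κ - 1}).toReal = 1 - σ2 / v ∧
    (∀ j : ℤ, j ≤ κ - 2 →
        (P {ω | Ss ω = j}).toReal = σ2 * (P {ω | S ω = j + 1}).toReal / v) := by
  -- every function out of ℤ is measurable
  have measG : ∀ (T : Ω → ℤ), Measurable T → ∀ G : ℤ → ℝ, Measurable fun ω => G (T ω) := by
    intro T hT G
    have hmG : Measurable G := fun _ _ => trivial
    exact hmG.comp hT
  -- bounded functions of an integer r.v. are integrable
  have intB : ∀ (G : ℤ → ℝ) (C : ℝ), (∀ i, |G i| ≤ C) → Integrable (fun ω => G (S ω)) P := by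
    intro G C hC
    exact (integrable_const C).mono' (measG S hS G).aestronglyMeasurable
      (Eventually.of_forall fun ω => by simpa using hC (S ω))
  -- S is integrable
  have intS : Integrable (fun ω => (S ω : ℝ)) P := by
    refine Integrable.mono' (g := fun ω => (S ω:ℝ)^2 + 1) (hint.add (integrable_const 1))
      (measG S hS (fun i => (i:ℝ))).aestronglyMeasurable ?_
    filter_upwards with ω
    have h := abs_nonneg ((S ω : ℝ))
    have h2 : |(S ω:ℝ)|^2 = (S ω:ℝ)^2 := sq_abs _
    simp only [Real.norm_eq_abs]
    nlinarith [sq_nonneg (|(S ω:ℝ)| - 1)]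
  have intSm : Integrable (fun ω => (S ω : ℝ) - μ) P := intS.sub (integrable_const μ)
  -- products (S - μ) * (bounded fn of S) are integrable
  have intSmul : ∀ G : ℤ → ℝ, (∀ i, |G i| ≤ 1) →
      Integrable (fun ω => ((S ω:ℝ) - μ) * G (S ω)) P := by
    intro G hG
    refine intSm.abs.mono'
      (measG S hS (fun i => ((i:ℝ) - μ) * G i)).aestronglyMeasurable ?_
    filter_upwards with ω
    simp only [Real.norm_eq_abs, abs_mul]
    calc |(S ω:ℝ) - μ| * |G (S ω)| ≤ |(S ω:ℝ) - μ| * 1 :=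
          mul_le_mul_of_nonneg_left (hG (S ω)) (abs_nonneg _)
      _ = |(S ω:ℝ) - μ| := mul_one _
  -- integral of an indicator
  have intInd : ∀ (T : Ω → ℤ), Measurable T → ∀ j : ℤ,
      ∫ ω, (if T ω = j then (1:ℝ) else 0) ∂P = (P {ω | T ω = j}).toReal := by
    intro T hT j
    have hms : MeasurableSet {ω | T ω = j} := hT (measurableSet_singleton j)
    rw [show (fun ω => if T ω = j then (1:ℝ) else 0) = Set.indicator {ω | T ω = j} 1 from
      funext fun ω => by simp [Set.indicator_apply, Set.mem_setOf_eq]]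
    exact integral_indicator_one hms
  -- mean zero
  have hmean : ∫ ω, ((S ω:ℝ) - μ) ∂P = 0 := by
    have h := hzb (fun _ => 1) ⟨1, fun i => by norm_num⟩
    simpa using h
  -- (S-μ)^2 is integrable
  have hSq : Integrable (fun ω => ((S ω:ℝ) - μ)^2) P := by
    have he : (fun ω => ((S ω:ℝ) - μ)^2) = fun ω => ((S ω:ℝ)^2 - (2*μ) * (S ω:ℝ)) + μ^2 := by
      funext ω; ring
    rw [he]; exact (hint.sub (intS.const_mul (2*μ))).add (integrable_const _)
  -- Lemma A: from the zero-bias identity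
  have hA : ∀ m : ℤ, ∫ ω, ((S ω:ℝ) - μ) * (if m ≤ S ω then (1:ℝ) else 0) ∂P
      = v * (P {ω | Ss ω = m - 1}).toReal := by
    intro m
    have h := hzb (fun i => if m ≤ i then (1:ℝ) else 0)
      ⟨1, fun i => by split_ifs <;> norm_num⟩
    rw [h]
    congr 1
    rw [show (fun ω => ((if m ≤ Ss ω + 1 then (1:ℝ) else 0) - if m ≤ Ss ω then (1:ℝ) else 0))
        = fun ω => if Ss ω = m - 1 then (1:ℝ) else 0 from
      funext fun ω => by split_ifs <;> first | ring1 | (exfalso; omega)]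
    exact intInd Ss hSs (m-1)
  -- Lemma B: hB for indicators, case m ≥ κ+1
  have hBge : ∀ m : ℤ, κ + 1 ≤ m →
      ∫ ω, ((S ω:ℝ) - μ) * (if m ≤ S ω then (1:ℝ) else 0) ∂P
        = σ2 * (P {ω | S ω = m - 1}).toReal := by
    intro m hm
    have h0 := hB (fun i => if m ≤ i then (1:ℝ) else 0)
      ⟨1, fun i => by split_ifs <;> norm_num⟩
    rw [show (fun ω => (if κ ≤ S ω then
          σ2 * ((if m ≤ S ω + 1 then (1:ℝ) else 0) - if m ≤ S ω then (1:ℝ) else 0)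
            - ((S ω : ℝ) - μ) * (if m ≤ S ω then (1:ℝ) else 0)
        else
          σ2 * ((if m ≤ S ω + 1 then (1:ℝ) else 0) - if m ≤ S ω then (1:ℝ) else 0)
            - ((S ω : ℝ) - μ) * (if m ≤ S ω + 1 then (1:ℝ) else 0)))
        = fun ω => σ2 * (if S ω = m - 1 then (1:ℝ) else 0)
            - ((S ω:ℝ) - μ) * (if m ≤ S ω then (1:ℝ) else 0) from
      funext fun ω => by split_ifs <;> first | ring1 | (exfalso; omega)] at h0
    have hi1 : Integrable (fun ω => σ2 * (if S ω = m - 1 then (1:ℝ) else 0)) P := by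
      refine intB (fun i => σ2 * (if i = m - 1 then (1:ℝ) else 0)) σ2 fun i => ?_
      split_ifs <;> simp [abs_of_nonneg hσ.le, hσ.le]
    have hi2 : Integrable (fun ω => ((S ω:ℝ) - μ) * (if m ≤ S ω then (1:ℝ) else 0)) P :=
      intSmul (fun i => if m ≤ i then (1:ℝ) else 0) (fun i => by split_ifs <;> norm_num)
    rw [integral_sub hi1 hi2, sub_eq_zero] at h0
    rw [← h0, integral_const_mul, intInd S hS (m-1)]
  -- Lemma C: hB for indicators, case m ≤ κ
  have hBle : ∀ m : ℤ, m ≤ κ →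
      ∫ ω, ((S ω:ℝ) - μ) * (if m - 1 ≤ S ω then (1:ℝ) else 0) ∂P
        = σ2 * (P {ω | S ω = m - 1}).toReal := by
    intro m hm
    have h0 := hB (fun i => if m ≤ i then (1:ℝ) else 0)
      ⟨1, fun i => by split_ifs <;> norm_num⟩
    rw [show (fun ω => (if κ ≤ S ω then
          σ2 * ((if m ≤ S ω + 1 then (1:ℝ) else 0) - if m ≤ S ω then (1:ℝ) else 0)
            - ((S ω : ℝ) - μ) * (if m ≤ S ω then (1:ℝ) else 0)
        else
          σ2 * ((if m ≤ S ω + 1 then (1:ℝ) else 0) - if m ≤ S ω then (1:ℝ) else 0)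
            - ((S ω : ℝ) - μ) * (if m ≤ S ω + 1 then (1:ℝ) else 0)))
        = fun ω => σ2 * (if S ω = m - 1 then (1:ℝ) else 0)
            - ((S ω:ℝ) - μ) * (if m - 1 ≤ S ω then (1:ℝ) else 0) from
      funext fun ω => by split_ifs <;> first | ring1 | (exfalso; omega)] at h0
    have hi1 : Integrable (fun ω => σ2 * (if S ω = m - 1 then (1:ℝ) else 0)) P := by
      refine intB (fun i => σ2 * (if i = m - 1 then (1:ℝ) else 0)) σ2 fun i => ?_
      split_ifs <;> simp [abs_of_nonneg hσ.le, hσ.le]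
    have hi2 : Integrable (fun ω => ((S ω:ℝ) - μ) * (if m - 1 ≤ S ω then (1:ℝ) else 0)) P :=
      intSmul (fun i => if m - 1 ≤ i then (1:ℝ) else 0) (fun i => by split_ifs <;> norm_num)
    rw [integral_sub hi1 hi2, sub_eq_zero] at h0
    rw [← h0, integral_const_mul, intInd S hS (m-1)]
  -- v > 0
  have hv0 : 0 ≤ v := hv ▸ integral_nonneg (fun ω => sq_nonneg _)
  have hvne : v ≠ 0 := by
    intro hveq
    have h00 : ∫ ω, ((S ω:ℝ) - μ)^2 ∂P = 0 := by rw [← hv]; exact hveq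
    have hae2 : ∀ᵐ ω ∂P, (S ω:ℝ) = μ := by
      have hae := (integral_eq_zero_iff_of_nonneg (fun ω => sq_nonneg _) hSq).1 h00
      filter_upwards [hae] with ω h
      have := pow_eq_zero_iff (n := 2) (by norm_num) |>.1 h
      linarith
    by_cases hex : ∃ j0 : ℤ, (j0:ℝ) = μ
    · obtain ⟨j0, hj0⟩ := hex
      have haeS : ∀ᵐ ω ∂P, S ω = j0 := by
        filter_upwards [hae2] with ω h
        exact_mod_cast h.trans hj0.symm
      have h0 := hB (fun i => if i = j0 then (1:ℝ) else 0)
        ⟨1, fun i => by split_ifs <;> norm_num⟩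
      have hcongr : (fun ω => (if κ ≤ S ω then
            σ2 * ((if S ω + 1 = j0 then (1:ℝ) else 0) - if S ω = j0 then (1:ℝ) else 0)
              - ((S ω : ℝ) - μ) * (if S ω = j0 then (1:ℝ) else 0)
          else
            σ2 * ((if S ω + 1 = j0 then (1:ℝ) else 0) - if S ω = j0 then (1:ℝ) else 0)
              - ((S ω : ℝ) - μ) * (if S ω + 1 = j0 then (1:ℝ) else 0)))
          =ᵐ[P] fun _ => -σ2 := by
        filter_upwards [haeS] with ω h
        rw [h, ← hj0]
        split_ifs <;> first | ring1 | (exfalso; omega)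
      rw [integral_congr_ae hcongr, integral_const] at h0
      simp at h0
      linarith
    · have hall : ∀ ω, ¬ ((S ω:ℝ) = μ) := fun ω h => hex ⟨S ω, h⟩
      rw [ae_iff] at hae2
      have huniv : P Set.univ = 0 := by
        rw [show (Set.univ : Set Ω) = {ω | ¬ (S ω:ℝ) = μ} from
          (Set.eq_univ_of_forall hall).symm]
        exact hae2
      simp [measure_univ] at huniv
  have hvpos : 0 < v := lt_of_le_of_ne hv0 (Ne.symm hvne)
  -- Lemma D: ∫ (S-μ) 1_{κ ≤ S} = v - σ2, by dominated convergence with clamped identity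
  have hD : ∫ ω, ((S ω:ℝ) - μ) * (if κ ≤ S ω then (1:ℝ) else 0) ∂P = v - σ2 := by
    have hi3 : Integrable (fun ω => ((S ω:ℝ) - μ) * (if κ ≤ S ω then (1:ℝ) else 0)) P :=
      intSmul (fun i => if κ ≤ i then (1:ℝ) else 0) (fun i => by split_ifs <;> norm_num)
    have hiSS : Integrable (fun ω => ((S ω:ℝ) - μ) * (S ω:ℝ)) P := by
      have he : (fun ω => ((S ω:ℝ) - μ) * (S ω:ℝ)) = fun ω => (S ω:ℝ)^2 - μ * (S ω:ℝ) := by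
        funext ω; ring
      rw [he]; exact hint.sub (intS.const_mul μ)
    -- the limit function
    set g : Ω → ℝ := fun ω => σ2 - ((S ω:ℝ) - μ) * (S ω:ℝ)
        - ((S ω:ℝ) - μ) * (if κ ≤ S ω then (0:ℝ) else 1) with hgdef
    have hg0 : ∫ ω, g ω ∂P = 0 := by
      have hFint : ∀ n : ℕ, ∫ ω, (if κ ≤ S ω then
            σ2 * (clampZ n (S ω + 1) - clampZ n (S ω)) - ((S ω : ℝ) - μ) * clampZ n (S ω)
          else
            σ2 * (clampZ n (S ω + 1) - clampZ n (S ω)) - ((S ω : ℝ) - μ) * clampZ n (S ω + 1)) ∂P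
          = 0 := fun n => hB (clampZ n) ⟨n, fun i => clampZ_bound n i⟩
      have hmeasF : ∀ n : ℕ, AEStronglyMeasurable (fun ω => (if κ ≤ S ω then
            σ2 * (clampZ n (S ω + 1) - clampZ n (S ω)) - ((S ω : ℝ) - μ) * clampZ n (S ω)
          else
            σ2 * (clampZ n (S ω + 1) - clampZ n (S ω)) - ((S ω : ℝ) - μ) * clampZ n (S ω + 1))) P :=
        fun n => (measG S hS (fun i => if κ ≤ i then
            σ2 * (clampZ n (i + 1) - clampZ n i) - ((i : ℝ) - μ) * clampZ n i
          else
            σ2 * (clampZ n (i + 1) - clampZ n i) - ((i : ℝ) - μ) * clampZ n (i + 1))).aestronglyMeasurable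
      have hbound_int : Integrable (fun ω => σ2 + (|(S ω:ℝ)| + |μ|) * (|(S ω:ℝ)| + 1)) P := by
        have h2i : Integrable (fun ω => |(S ω:ℝ)| * |(S ω:ℝ)|) P := by
          have he : (fun ω => |(S ω:ℝ)| * |(S ω:ℝ)|) = fun ω => (S ω:ℝ)^2 := by
            funext ω; rw [← abs_mul, ← sq, abs_of_nonneg (sq_nonneg _)]
          rw [he]; exact hint
        have he : (fun ω => σ2 + (|(S ω:ℝ)| + |μ|) * (|(S ω:ℝ)| + 1)) =
            fun ω => (|(S ω:ℝ)| * |(S ω:ℝ)| + (1 + |μ|) * |(S ω:ℝ)|) + (σ2 + |μ|) := by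
          funext ω; ring
        rw [he]; exact (h2i.add (intS.abs.const_mul _)).add (integrable_const _)
      have hFbd : ∀ n : ℕ, ∀ᵐ ω ∂P, ‖(if κ ≤ S ω then
            σ2 * (clampZ n (S ω + 1) - clampZ n (S ω)) - ((S ω : ℝ) - μ) * clampZ n (S ω)
          else
            σ2 * (clampZ n (S ω + 1) - clampZ n (S ω)) - ((S ω : ℝ) - μ) * clampZ n (S ω + 1))‖
          ≤ σ2 + (|(S ω:ℝ)| + |μ|) * (|(S ω:ℝ)| + 1) := by
        intro n
        filter_upwards with ω
        have hstep := clampZ_step n (S ω)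
        have habs1 := clampZ_le_abs n (S ω)
        have habs2 := clampZ_le_abs n (S ω + 1)
        have hcast : |((S ω + 1 : ℤ):ℝ)| ≤ |(S ω:ℝ)| + 1 := by
          push_cast
          exact (abs_add_le _ _).trans (by norm_num)
        have hsub : |(S ω:ℝ) - μ| ≤ |(S ω:ℝ)| + |μ| := abs_sub _ _
        have e1 : |σ2 * (clampZ n (S ω + 1) - clampZ n (S ω))| ≤ σ2 := by
          rw [abs_mul, abs_of_nonneg hσ.le]
          nlinarith
        rw [Real.norm_eq_abs]
        split_ifs with hκ
        · have e2 : |((S ω:ℝ) - μ) * clampZ n (S ω)| ≤ (|(S ω:ℝ)| + |μ|) * (|(S ω:ℝ)| + 1) := by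
            rw [abs_mul]
            exact mul_le_mul hsub (habs1.trans (by linarith [abs_nonneg ((S ω:ℝ))]))
              (abs_nonneg _) (by positivity)
          calc |σ2 * (clampZ n (S ω + 1) - clampZ n (S ω)) - ((S ω:ℝ) - μ) * clampZ n (S ω)|
              ≤ |σ2 * (clampZ n (S ω + 1) - clampZ n (S ω))| + |((S ω:ℝ) - μ) * clampZ n (S ω)| :=
                abs_sub _ _
            _ ≤ σ2 + (|(S ω:ℝ)| + |μ|) * (|(S ω:ℝ)| + 1) := add_le_add e1 e2
        · have e2 : |((S ω:ℝ) - μ) * clampZ n (S ω + 1)| ≤ (|(S ω:ℝ)| + |μ|) * (|(S ω:ℝ)| + 1) := by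
            rw [abs_mul]
            exact mul_le_mul hsub (habs2.trans hcast) (abs_nonneg _) (by positivity)
          calc |σ2 * (clampZ n (S ω + 1) - clampZ n (S ω)) - ((S ω:ℝ) - μ) * clampZ n (S ω + 1)|
              ≤ |σ2 * (clampZ n (S ω + 1) - clampZ n (S ω))| + |((S ω:ℝ) - μ) * clampZ n (S ω + 1)| :=
                abs_sub _ _
            _ ≤ σ2 + (|(S ω:ℝ)| + |μ|) * (|(S ω:ℝ)| + 1) := add_le_add e1 e2
      have hlim : ∀ᵐ ω ∂P, Tendsto (fun n : ℕ => (if κ ≤ S ω then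
            σ2 * (clampZ n (S ω + 1) - clampZ n (S ω)) - ((S ω : ℝ) - μ) * clampZ n (S ω)
          else
            σ2 * (clampZ n (S ω + 1) - clampZ n (S ω)) - ((S ω : ℝ) - μ) * clampZ n (S ω + 1)))
          atTop (nhds (g ω)) := by
        filter_upwards with ω
        have hev : ∀ᶠ n : ℕ in atTop, (if κ ≤ S ω then
            σ2 * (clampZ n (S ω + 1) - clampZ n (S ω)) - ((S ω : ℝ) - μ) * clampZ n (S ω)
          else
            σ2 * (clampZ n (S ω + 1) - clampZ n (S ω)) - ((S ω : ℝ) - μ) * clampZ n (S ω + 1))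
            = g ω := by
          filter_upwards [eventually_ge_atTop ((S ω).natAbs + 1)] with n hn
          have e1 : clampZ n (S ω) = (S ω:ℝ) := clampZ_eq n _ (by omega)
          have e2 : clampZ n (S ω + 1) = ((S ω:ℝ) + 1) := by
            rw [clampZ_eq n _ (by omega)]; push_cast; ring
          simp only [hgdef]
          by_cases hκ : κ ≤ S ω <;>
            simp only [hκ, if_true, if_false, ite_true, ite_false] <;> rw [e1, e2] <;> ring
        exact Tendsto.congr' (hev.mono fun n h => h.symm) tendsto_const_nhds
      have ht := tendsto_integral_of_dominated_convergence _ hmeasF hbound_int hFbd hlim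
      have ht0 : Tendsto (fun _ : ℕ => (0:ℝ)) atTop (nhds (∫ ω, g ω ∂P)) := by
        refine ht.congr fun n => ?_
        rw [hFint n]
      exact (tendsto_nhds_unique ht0 tendsto_const_nhds)
    -- unpack ∫ g = 0
    have hi4 : Integrable (fun ω => ((S ω:ℝ) - μ) * (if κ ≤ S ω then (0:ℝ) else 1)) P :=
      intSmul (fun i => if κ ≤ i then (0:ℝ) else 1) (fun i => by split_ifs <;> norm_num)
    have hvS : ∫ ω, ((S ω:ℝ) - μ) * (S ω:ℝ) ∂P = v := by
      have he : (fun ω => ((S ω:ℝ) - μ) * (S ω:ℝ))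
          = fun ω => ((S ω:ℝ) - μ)^2 + μ * ((S ω:ℝ) - μ) := by funext ω; ring
      rw [he, integral_add hSq (intSm.const_mul μ), integral_const_mul, hmean, ← hv]
      ring
    have hsplit : ∫ ω, ((S ω:ℝ) - μ) * (if κ ≤ S ω then (0:ℝ) else 1) ∂P
        = - ∫ ω, ((S ω:ℝ) - μ) * (if κ ≤ S ω then (1:ℝ) else 0) ∂P := by
      have he : (fun ω => ((S ω:ℝ) - μ) * (if κ ≤ S ω then (0:ℝ) else 1))
          = fun ω => ((S ω:ℝ) - μ) - ((S ω:ℝ) - μ) * (if κ ≤ S ω then (1:ℝ) else 0) := by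
        funext ω; split_ifs <;> ring
      rw [he, integral_sub intSm hi3, hmean]
      ring
    have hgsplit : ∫ ω, g ω ∂P = σ2 - (∫ ω, ((S ω:ℝ) - μ) * (S ω:ℝ) ∂P)
        - ∫ ω, ((S ω:ℝ) - μ) * (if κ ≤ S ω then (0:ℝ) else 1) ∂P := by
      have hiA : Integrable (fun ω => σ2 - ((S ω:ℝ) - μ) * (S ω:ℝ)) P :=
        (integrable_const σ2).sub hiSS
      simp only [hgdef]
      rw [integral_sub hiA hi4, integral_sub (integrable_const σ2) hiSS, integral_const]
      simp [measure_univ]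
    rw [hgsplit, hvS, hsplit] at hg0
    linarith
  -- Finish
  refine ⟨?_, ?_, ?_⟩
  · intro j hj
    have hA1 := hA (j+1)
    have hB1 := hBge (j+1) (by omega)
    rw [show j + 1 - 1 = j from by ring] at hA1 hB1
    have : v * (P {ω | Ss ω = j}).toReal = σ2 * (P {ω | S ω = j}).toReal := by
      rw [← hA1, hB1]
    rw [eq_div_iff hvne]
    linarith
  · have hA1 := hA κ
    have : v * (P {ω | Ss ω = κ - 1}).toReal = v - σ2 := by rw [← hA1, hD]
    have hx : (P {ω | Ss ω = κ - 1}).toReal = (v - σ2) / v := by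
      rw [eq_div_iff hvne]; linarith
    rw [hx, sub_div, div_self hvne]
  · intro j hj
    have hA1 := hA (j+1)
    have hC1 := hBle (j+2) (by omega)
    rw [show j + 2 - 1 = j + 1 from by ring] at hC1
    rw [show j + 1 - 1 = j from by ring] at hA1
    have : v * (P {ω | Ss ω = j}).toReal = σ2 * (P {ω | S ω = j + 1}).toReal := by
      rw [← hA1, hC1]
    rw [eq_div_iff hvne]
    linarith
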